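/- For every n ≥ 1, Σ over pairs (d₁,d₂) with lcm(d₁,d₂) = n of gcd(d₁,d₂) equals the number of cyclic subgroups of the group C_n × C_n, where C_n is the cyclic group of order n. -/

import Mathlib

open Finset

private lemma auxCoprimeLcmDiv {d₁ d₂ : ℕ} (h₁ : 0 < d₁) (h₂ : 0 < d₂) :
    Nat.gcd (Nat.lcm d₁ d₂ / d₁) (Nat.lcm d₁ d₂ / d₂) = 1 := by
  set L := Nat.lcm d₁ d₂ with hL
  have hLpos : 0 < L := Nat.pos_of_ne_zero (Nat.lcm_ne_zero h₁.ne' h₂.ne')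
  set g := Nat.gcd (L / d₁) (L / d₂) with hg
  have hd1 : d₁ ∣ L := Nat.dvd_lcm_left _ _
  have hd2 : d₂ ∣ L := Nat.dvd_lcm_right _ _
  have k1 : d₁ * g ∣ L := by
    obtain ⟨c, hc⟩ := Nat.gcd_dvd_left (L / d₁) (L / d₂)
    exact ⟨c, by rw [mul_assoc, ← hc, Nat.mul_div_cancel' hd1]⟩
  have k2 : d₂ * g ∣ L := by
    obtain ⟨c, hc⟩ := Nat.gcd_dvd_right (L / d₁) (L / d₂)
    exact ⟨c, by rw [mul_assoc, ← hc, Nat.mul_div_cancel' hd2]⟩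
  have k3 : Nat.lcm (d₁ * g) (d₂ * g) ∣ L := Nat.lcm_dvd k1 k2
  rw [Nat.lcm_mul_right] at k3
  have : L * g ∣ L * 1 := by simpa [hL] using k3
  exact Nat.dvd_one.mp ((Nat.mul_dvd_mul_iff_left hLpos).mp this)

private lemma auxGcdDivMul {n d₁ d₂ : ℕ} (hn : 0 < n) (h₁ : d₁ ∣ n) (h₂ : d₂ ∣ n) :
    Nat.gcd (n / d₁) (n / d₂) * Nat.lcm d₁ d₂ = n := by
  have hd₁ : 0 < d₁ := Nat.pos_of_dvd_of_pos h₁ hn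
  have hd₂ : 0 < d₂ := Nat.pos_of_dvd_of_pos h₂ hn
  have hL : Nat.lcm d₁ d₂ ∣ n := Nat.lcm_dvd h₁ h₂
  obtain ⟨m, hm⟩ := hL
  have e₁ : n / d₁ = (Nat.lcm d₁ d₂ / d₁) * m := by
    obtain ⟨c, hc⟩ := Nat.dvd_lcm_left d₁ d₂
    rw [hm, hc, Nat.mul_div_cancel_left _ hd₁, mul_assoc, Nat.mul_div_cancel_left _ hd₁]
  have e₂ : n / d₂ = (Nat.lcm d₁ d₂ / d₂) * m := by
    obtain ⟨c, hc⟩ := Nat.dvd_lcm_right d₁ d₂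
    rw [hm, hc, Nat.mul_div_cancel_left _ hd₂, mul_assoc, Nat.mul_div_cancel_left _ hd₂]
  rw [e₁, e₂, Nat.gcd_mul_right, auxCoprimeLcmDiv hd₁ hd₂, one_mul, mul_comm, ← hm]

private lemma auxLcmDivMul {n a b : ℕ} (hn : 0 < n) (ha : a ∣ n) (hb : b ∣ n) :
    Nat.lcm (n / a) (n / b) * Nat.gcd a b = n := by
  have := auxGcdDivMul hn (Nat.div_dvd_of_dvd ha) (Nat.div_dvd_of_dvd hb)
  rwa [Nat.div_div_self ha hn.ne', Nat.div_div_self hb hn.ne', mul_comm] at this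

private lemma auxRound {n e d : ℕ} (hn : 0 < n) (hd : d ∣ n) (he : e ∣ d) (hd0 : 0 < d) :
    e * (n / (e * (n / d))) = d := by
  obtain ⟨q, hq⟩ := hd
  obtain ⟨c, hc⟩ := he
  have he0 : 0 < e := Nat.pos_of_dvd_of_pos ⟨c, hc⟩ hd0
  have hq0 : 0 < q := by
    rcases Nat.eq_zero_or_pos q with h | h
    · subst h; simp at hq; omega
    · exact h
  have h1 : n / d = q := by rw [hq, Nat.mul_div_cancel_left _ hd0]
  rw [h1, hq, hc, show e * c * q = c * (e * q) by ring,
    Nat.mul_div_cancel _ (by positivity)]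

section
variable {n : ℕ}

private lemma partA (hn : 0 < n) :
    (∑ d₁ ∈ n.divisors, ∑ d₂ ∈ n.divisors,
        if Nat.lcm d₁ d₂ = n then Nat.gcd d₁ d₂ else 0) =
      ∑ d₁ ∈ n.divisors, ∑ d₂ ∈ n.divisors, Nat.totient (Nat.gcd d₁ d₂) := by
  classical
  set D := n.divisors with hD
  have hmem : ∀ {d : ℕ}, d ∈ D → d ∣ n ∧ 0 < d := by
    intro d hd
    rw [hD, Nat.mem_divisors] at hd
    exact ⟨hd.1, Nat.pos_of_dvd_of_pos hd.1 hn⟩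
  -- Step 1 : LHS as a sum over triples
  have L1 : (∑ d₁ ∈ D, ∑ d₂ ∈ D, if Nat.lcm d₁ d₂ = n then Nat.gcd d₁ d₂ else 0)
      = ∑ t ∈ ((D ×ˢ D) ×ˢ D).filter
          (fun t => Nat.lcm t.1.1 t.1.2 = n ∧ t.2 ∣ t.1.1 ∧ t.2 ∣ t.1.2),
          Nat.totient t.2 := by
    rw [Finset.sum_filter, Finset.sum_product, ← Finset.sum_product']
    apply Finset.sum_congr rfl
    rintro ⟨d₁, d₂⟩ hp
    simp only [Finset.mem_product] at hp
    obtain ⟨h₁, h₂⟩ := hp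
    by_cases h : Nat.lcm d₁ d₂ = n
    · simp only [h, if_true, true_and]
      have hgd : Nat.gcd d₁ d₂ ∣ n := (Nat.gcd_dvd_left d₁ d₂).trans (hmem h₁).1
      have : D.filter (fun e => e ∣ d₁ ∧ e ∣ d₂) = (Nat.gcd d₁ d₂).divisors := by
        ext e
        simp only [Finset.mem_filter, hD, Nat.mem_divisors, Nat.dvd_gcd_iff]
        constructor
        · rintro ⟨_, h⟩
          exact ⟨h, Nat.pos_of_dvd_of_pos hgd hn |>.ne'⟩
        · rintro ⟨h, -⟩
          exact ⟨⟨h.1.trans (hmem h₁).1, hn.ne'⟩, h⟩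
      rw [← Finset.sum_filter, this, Nat.sum_totient]
    · simp [h]
  -- Step 2 : RHS as a sum over triples
  have L2 : (∑ d₁ ∈ D, ∑ d₂ ∈ D, Nat.totient (Nat.gcd d₁ d₂))
      = ∑ t ∈ ((D ×ˢ D) ×ˢ D).filter (fun t => Nat.gcd t.1.1 t.1.2 = t.2),
          Nat.totient t.2 := by
    rw [Finset.sum_filter, Finset.sum_product, ← Finset.sum_product']
    apply Finset.sum_congr rfl
    rintro ⟨d₁, d₂⟩ hp
    simp only [Finset.mem_product] at hp
    obtain ⟨h₁, h₂⟩ := hp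
    have hgd : Nat.gcd d₁ d₂ ∈ D := by
      rw [hD, Nat.mem_divisors]
      exact ⟨(Nat.gcd_dvd_left d₁ d₂).trans (hmem h₁).1, hn.ne'⟩
    rw [Finset.sum_ite_eq D (Nat.gcd d₁ d₂) (fun e => Nat.totient e), if_pos hgd]
  rw [L1, L2]
  -- Step 3 : bijection between the two triple sets
  apply Finset.sum_nbij' (i := fun t => ((t.2 * (n / t.1.2), t.2 * (n / t.1.1)), t.2))
    (j := fun t => ((t.2 * (n / t.1.2), t.2 * (n / t.1.1)), t.2))
  · rintro ⟨⟨d₁, d₂⟩, e⟩ ht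
    simp only [Finset.mem_filter, Finset.mem_product] at ht ⊢
    obtain ⟨⟨⟨hd₁, hd₂⟩, he⟩, hlcm, he₁, he₂⟩ := ht
    obtain ⟨hd₁n, hd₁p⟩ := hmem hd₁
    obtain ⟨hd₂n, hd₂p⟩ := hmem hd₂
    refine ⟨⟨⟨?_, ?_⟩, he⟩, ?_⟩
    · rw [hD, Nat.mem_divisors]
      refine ⟨?_, hn.ne'⟩
      calc e * (n / d₂) ∣ d₂ * (n / d₂) := Nat.mul_dvd_mul_right he₂ _
        _ = n := Nat.mul_div_cancel' hd₂n
    · rw [hD, Nat.mem_divisors]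
      refine ⟨?_, hn.ne'⟩
      calc e * (n / d₁) ∣ d₁ * (n / d₁) := Nat.mul_dvd_mul_right he₁ _
        _ = n := Nat.mul_div_cancel' hd₁n
    · rw [Nat.gcd_mul_left]
      have : Nat.gcd (n / d₂) (n / d₁) * Nat.lcm d₂ d₁ = n := auxGcdDivMul hn hd₂n hd₁n
      rw [Nat.lcm_comm, hlcm] at this
      have hgcd1 : Nat.gcd (n / d₂) (n / d₁) = 1 :=
        Nat.eq_of_mul_eq_mul_right hn (this.trans (one_mul n).symm)
      rw [hgcd1, mul_one]
  · rintro ⟨⟨a, b⟩, e⟩ ht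
    simp only [Finset.mem_filter, Finset.mem_product] at ht ⊢
    obtain ⟨⟨⟨ha, hb⟩, he⟩, hgcd⟩ := ht
    obtain ⟨han, hap⟩ := hmem ha
    obtain ⟨hbn, hbp⟩ := hmem hb
    have hea : e ∣ a := hgcd ▸ Nat.gcd_dvd_left a b
    have heb : e ∣ b := hgcd ▸ Nat.gcd_dvd_right a b
    refine ⟨⟨⟨?_, ?_⟩, he⟩, ?_, ?_, ?_⟩
    · rw [hD, Nat.mem_divisors]
      refine ⟨?_, hn.ne'⟩
      calc e * (n / b) ∣ b * (n / b) := Nat.mul_dvd_mul_right heb _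
        _ = n := Nat.mul_div_cancel' hbn
    · rw [hD, Nat.mem_divisors]
      refine ⟨?_, hn.ne'⟩
      calc e * (n / a) ∣ a * (n / a) := Nat.mul_dvd_mul_right hea _
        _ = n := Nat.mul_div_cancel' han
    · rw [Nat.lcm_mul_left]
      have : Nat.lcm (n / b) (n / a) * Nat.gcd b a = n := auxLcmDivMul hn hbn han
      rw [Nat.gcd_comm, hgcd] at this
      have hen : e ∣ n := hgcd ▸ (Nat.gcd_dvd_left a b).trans han
      have hep : 0 < e := hgcd ▸ Nat.pos_of_dvd_of_pos (hgcd ▸ hea) hap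
      -- e * lcm(n/b, n/a) = n
      calc e * Nat.lcm (n / b) (n / a) = Nat.lcm (n / b) (n / a) * e := mul_comm _ _
        _ = n := this
    · exact Nat.dvd_mul_right e _
    · exact Nat.dvd_mul_right e _
  · rintro ⟨⟨d₁, d₂⟩, e⟩ ht
    simp only [Finset.mem_filter, Finset.mem_product] at ht
    obtain ⟨⟨⟨hd₁, hd₂⟩, he⟩, hlcm, he₁, he₂⟩ := ht
    obtain ⟨hd₁n, hd₁p⟩ := hmem hd₁
    obtain ⟨hd₂n, hd₂p⟩ := hmem hd₂
    simp only [Prod.mk.injEq]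
    exact ⟨⟨auxRound hn hd₁n he₁ hd₁p, auxRound hn hd₂n he₂ hd₂p⟩, trivial⟩
  · rintro ⟨⟨a, b⟩, e⟩ ht
    simp only [Finset.mem_filter, Finset.mem_product] at ht
    obtain ⟨⟨⟨ha, hb⟩, he⟩, hgcd⟩ := ht
    obtain ⟨han, hap⟩ := hmem ha
    obtain ⟨hbn, hbp⟩ := hmem hb
    have hea : e ∣ a := hgcd ▸ Nat.gcd_dvd_left a b
    have heb : e ∣ b := hgcd ▸ Nat.gcd_dvd_right a b
    simp only [Prod.mk.injEq]
    exact ⟨⟨auxRound hn han hea hap, auxRound hn hbn heb hbp⟩, trivial⟩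
  · intro t ht
    rfl

end

-- number of generators of a cyclic subgroup
private lemma genCount {A : Type*} [AddCommGroup A] [Fintype A] [DecidableEq A] [DecidableEq (AddSubgroup A)] (g : A) :
    (Finset.univ.filter fun h : A =>
        AddSubgroup.zmultiples h = AddSubgroup.zmultiples g).card
      = Nat.totient (addOrderOf g) := by
  classical
  set H := AddSubgroup.zmultiples g with hH
  haveI : IsAddCyclic H := by
    refine ⟨⟨⟨g, AddSubgroup.mem_zmultiples g⟩, fun x => ?_⟩⟩
    obtain ⟨x, hx⟩ := x
    obtain ⟨k, hk⟩ := AddSubgroup.mem_zmultiples_iff.mp hx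
    exact ⟨k, Subtype.ext (by simpa using hk)⟩
  have hcard : Fintype.card H = addOrderOf g := by
    rw [← Nat.card_eq_fintype_card, hH, Nat.card_zmultiples]
  have key := IsAddCyclic.card_addOrderOf_eq_totient (α := H) (d := addOrderOf g)
    (by rw [hcard])
  rw [← key]
  apply Finset.card_bij (fun h hh => (⟨h, by
      have : h ∈ AddSubgroup.zmultiples h := AddSubgroup.mem_zmultiples h
      rwa [(Finset.mem_filter.mp hh).2] at this⟩ : H))
  · intro a ha
    have hza := (Finset.mem_filter.mp ha).2
    simp only [Finset.mem_filter, Finset.mem_univ, true_and, Set.mem_setOf_eq]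
    rw [AddSubgroup.addOrderOf_mk]
    rw [← Nat.card_zmultiples a, hza, hH, Nat.card_zmultiples]
  · intro a ha b hb hab
    exact congrArg Subtype.val hab
  · rintro ⟨x, hxH⟩ hx
    have hox : addOrderOf x = addOrderOf g := by
      have := (Finset.mem_filter.mp hx).2
      rwa [AddSubgroup.addOrderOf_mk] at this
    refine ⟨x, ?_, rfl⟩
    rw [Finset.mem_filter]
    refine ⟨Finset.mem_univ _, ?_⟩
    have hle : AddSubgroup.zmultiples x ≤ H := (AddSubgroup.zmultiples_le).mpr hxH
    refine AddSubgroup.eq_of_le_of_card_ge hle ?_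
    have hx2 : Nat.card (AddSubgroup.zmultiples x) = addOrderOf g := by
      rw [Nat.card_zmultiples]
      exact hox
    rw [hx2, hH, Nat.card_zmultiples]

private lemma ordersEq {A B : Type*} [AddGroup A] [AddGroup B] {g g' : A × B}
    (h : AddSubgroup.zmultiples g = AddSubgroup.zmultiples g') :
    addOrderOf g.1 = addOrderOf g'.1 ∧ addOrderOf g.2 = addOrderOf g'.2 := by
  have h1 := congrArg (AddSubgroup.map (AddMonoidHom.fst A B)) h
  have h2 := congrArg (AddSubgroup.map (AddMonoidHom.snd A B)) h
  rw [AddMonoidHom.map_zmultiples, AddMonoidHom.map_zmultiples] at h1 h2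
  constructor
  · have := congrArg (fun S : AddSubgroup A => Nat.card S) h1
    simpa [Nat.card_zmultiples] using this
  · have := congrArg (fun S : AddSubgroup B => Nat.card S) h2
    simpa [Nat.card_zmultiples] using this

private lemma zmodCount {n d : ℕ} [NeZero n] [DecidableEq (ZMod n)] (hd : d ∣ n) :
    (Finset.univ.filter fun x : ZMod n => addOrderOf x = d).card = Nat.totient d := by
  have key := IsAddCyclic.card_addOrderOf_eq_totient (α := ZMod n) (d := d)
    (by rwa [ZMod.card])
  rw [← key]

private lemma totGcdLcm {a b : ℕ} (ha : 0 < a) (hb : 0 < b) :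
    Nat.totient (Nat.gcd a b) * Nat.totient (Nat.lcm a b)
      = Nat.totient a * Nat.totient b := by
  have h1 := Nat.totient_gcd_mul_totient_mul a b
  have h2 := Nat.totient_gcd_mul_totient_mul (Nat.gcd a b) (Nat.lcm a b)
  rw [Nat.gcd_eq_left ((Nat.gcd_dvd_left a b).trans (Nat.dvd_lcm_left a b)),
    Nat.gcd_mul_lcm] at h2
  have hg : 0 < Nat.gcd a b := Nat.gcd_pos_of_pos_left _ ha
  exact Nat.eq_of_mul_eq_mul_right hg (h2.symm.trans h1)

private lemma partB {n : ℕ} (hn : 0 < n) :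
    Nat.card {H : AddSubgroup (ZMod n × ZMod n) // ∃ g, H = AddSubgroup.zmultiples g}
      = ∑ d₁ ∈ n.divisors, ∑ d₂ ∈ n.divisors, Nat.totient (Nat.gcd d₁ d₂) := by
  classical
  haveI : NeZero n := ⟨hn.ne'⟩
  set F : (ZMod n × ZMod n) → AddSubgroup (ZMod n × ZMod n) := fun g => AddSubgroup.zmultiples g with hF
  have step0 : Nat.card {H : AddSubgroup (ZMod n × ZMod n) // ∃ g, H = AddSubgroup.zmultiples g}
      = (Finset.univ.image F).card := by
    have e1 : {H : AddSubgroup (ZMod n × ZMod n) // ∃ g, H = AddSubgroup.zmultiples g} ≃ (Set.range F) :=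
      Equiv.subtypeEquivRight (fun H => ⟨fun ⟨g, h⟩ => ⟨g, h.symm⟩, fun ⟨g, h⟩ => ⟨g, h.symm⟩⟩)
    rw [Nat.card_congr e1, ← Set.image_univ, ← Finset.coe_univ, ← Finset.coe_image,
      Nat.card_coe_set_eq, Set.ncard_coe_finset]
  rw [step0]
  set D := n.divisors with hD
  set A : ℕ × ℕ → Finset (ZMod n × ZMod n) := fun p =>
    Finset.univ.filter (fun g : ZMod n × ZMod n => addOrderOf g.1 = p.1 ∧ addOrderOf g.2 = p.2) with hA
  have hunion : (Finset.univ : Finset (ZMod n × ZMod n)) = (D ×ˢ D).biUnion A := by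
    ext g
    simp only [Finset.mem_univ, true_iff, Finset.mem_biUnion]
    refine ⟨(addOrderOf g.1, addOrderOf g.2), ?_, ?_⟩
    · simp only [Finset.mem_product, hD, Nat.mem_divisors]
      constructor
      · exact ⟨by simpa [ZMod.card] using addOrderOf_dvd_card (x := g.1), hn.ne'⟩
      · exact ⟨by simpa [ZMod.card] using addOrderOf_dvd_card (x := g.2), hn.ne'⟩
    · simp [hA]
  have hdisj : ∀ p ∈ D ×ˢ D, ∀ q ∈ D ×ˢ D, p ≠ q →
      Disjoint ((A p).image F) ((A q).image F) := by
    intro p _ q _ hpq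
    rw [Finset.disjoint_left]
    intro H hHp hHq
    obtain ⟨g, hg, hgH⟩ := Finset.mem_image.mp hHp
    obtain ⟨g', hg', hgH'⟩ := Finset.mem_image.mp hHq
    have hzz : AddSubgroup.zmultiples g = AddSubgroup.zmultiples g' :=
      hgH.trans hgH'.symm
    obtain ⟨e1, e2⟩ := ordersEq hzz
    obtain ⟨f1, f2⟩ := (Finset.mem_filter.mp hg).2
    obtain ⟨f1', f2'⟩ := (Finset.mem_filter.mp hg').2
    exact hpq (Prod.ext (f1 ▸ f1' ▸ e1) (f2 ▸ f2' ▸ e2))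
  have himg : Finset.univ.image F = (D ×ˢ D).biUnion (fun p => (A p).image F) := by
    rw [hunion, Finset.biUnion_image]
  have hstratum : ∀ p ∈ D ×ˢ D,
      ((A p).image F).card = Nat.totient (Nat.gcd p.1 p.2) := by
    rintro ⟨d₁, d₂⟩ hp
    rw [Finset.mem_product, hD, Nat.mem_divisors, Nat.mem_divisors] at hp
    obtain ⟨⟨hd₁, -⟩, hd₂, -⟩ := hp
    have hd₁p : 0 < d₁ := Nat.pos_of_dvd_of_pos hd₁ hn
    have hd₂p : 0 < d₂ := Nat.pos_of_dvd_of_pos hd₂ hn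
    -- cardinality of the stratum
    have hAcard : (A (d₁, d₂)).card = Nat.totient d₁ * Nat.totient d₂ := by
      have : A (d₁, d₂) =
          ((Finset.univ.filter fun x : ZMod n => addOrderOf x = d₁) ×ˢ
            (Finset.univ.filter fun y : ZMod n => addOrderOf y = d₂)) := by
        ext g
        simp [hA, Finset.mem_product, Finset.mem_filter]
      rw [this, Finset.card_product, zmodCount hd₁, zmodCount hd₂]
    -- fibers of F on the stratum
    have hfib : ∀ H ∈ (A (d₁, d₂)).image F,
        ((A (d₁, d₂)).filter fun g => F g = H).card
          = Nat.totient (Nat.lcm d₁ d₂) := by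
      intro H hH
      obtain ⟨g₀, hg₀A, hFg₀⟩ := Finset.mem_image.mp hH
      obtain ⟨o1, o2⟩ := (Finset.mem_filter.mp hg₀A).2
      have hordg₀ : addOrderOf g₀ = Nat.lcm d₁ d₂ := by
        rw [Prod.addOrderOf, o1, o2]
      have hset : (A (d₁, d₂)).filter (fun g => F g = H)
          = Finset.univ.filter (fun g : ZMod n × ZMod n =>
              AddSubgroup.zmultiples g = AddSubgroup.zmultiples g₀) := by
        ext g
        simp only [Finset.mem_filter, Finset.mem_univ, true_and, hA]
        constructor
        · rintro ⟨-, h⟩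
          exact (h.trans hFg₀.symm : AddSubgroup.zmultiples g = AddSubgroup.zmultiples g₀)
        · intro h
          obtain ⟨e1, e2⟩ := ordersEq h
          exact ⟨⟨e1.trans o1, e2.trans o2⟩, (h.trans hFg₀ : F g = H)⟩
      rw [hset, genCount g₀, hordg₀]
    have hcount : (A (d₁, d₂)).card
        = ((A (d₁, d₂)).image F).card * Nat.totient (Nat.lcm d₁ d₂) := by
      rw [Finset.card_eq_sum_card_image F (A (d₁, d₂)), Finset.sum_congr rfl hfib,
        Finset.sum_const, smul_eq_mul]
    have hlcmpos : 0 < Nat.totient (Nat.lcm d₁ d₂) :=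
      Nat.totient_pos.mpr (Nat.pos_of_ne_zero (Nat.lcm_ne_zero hd₁p.ne' hd₂p.ne'))
    have : ((A (d₁, d₂)).image F).card * Nat.totient (Nat.lcm d₁ d₂)
        = Nat.totient (Nat.gcd d₁ d₂) * Nat.totient (Nat.lcm d₁ d₂) := by
      rw [← hcount, hAcard, ← totGcdLcm hd₁p hd₂p]
    exact Nat.eq_of_mul_eq_mul_right hlcmpos this
  rw [himg, Finset.card_biUnion hdisj, Finset.sum_congr rfl hstratum,
    Finset.sum_product]

theorem lcm_gcd_sum_eq_card_cyclic_subgroups :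
    ∀ n : ℕ, 1 ≤ n →
      (∑ d₁ ∈ n.divisors, ∑ d₂ ∈ n.divisors,
          if Nat.lcm d₁ d₂ = n then Nat.gcd d₁ d₂ else 0) =
        Nat.card {H : AddSubgroup (ZMod n × ZMod n) //
          ∃ g, H = AddSubgroup.zmultiples g} := by
  intro n hn
  rw [partA hn, ← partB hn]
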